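/- For π ∈ S_{n-1} and r ≥ 1, the set S(π) = {π_i : π_{i-1} ≥ π_i + r} ∪ {π_i : π_i > n - r} has cardinality rdes(π) + r - 1, where rdes(π) = |{i ∈ [n-2] : π_i ≥ π_{i+1} + r}|. -/

import Mathlib

open Finset Equiv

namespace PaperStat

noncomputable section

attribute [local instance] Classical.propDecidable

/-- number of inversions of a permutation (pairs i<j with π i > π j) -/
def inv {n : ℕ} (π : Perm (Fin n)) : ℕ :=
  (univ.filter (fun p : Fin n × Fin n => p.1 < p.2 ∧ π p.2 < π p.1)).card

/-- pairs (i, i+1) forming an r-descent -/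
def desSet {n : ℕ} (r : ℕ) (π : Perm (Fin n)) : Finset (Fin n × Fin n) :=
  univ.filter (fun p : Fin n × Fin n =>
    (p.2 : ℕ) = (p.1 : ℕ) + 1 ∧ (π p.2 : ℕ) + r ≤ (π p.1 : ℕ))

/-- r-descent number -/
def rdes {n : ℕ} (r : ℕ) (π : Perm (Fin n)) : ℕ := (desSet r π).card

/-- r-major index: sum of (1-based) r-descent positions plus |rInv| -/
def rmaj {n : ℕ} (r : ℕ) (π : Perm (Fin n)) : ℕ :=
  (∑ p ∈ desSet r π, ((p.1 : ℕ) + 1)) +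
  (univ.filter (fun p : Fin n × Fin n =>
      p.1 < p.2 ∧ (π p.2 : ℕ) < (π p.1 : ℕ) ∧ (π p.1 : ℕ) < (π p.2 : ℕ) + r)).card

/-- descent number -/
def des {n : ℕ} (π : Perm (Fin n)) : ℕ := rdes 1 π

/-- major index -/
def maj {n : ℕ} (π : Perm (Fin n)) : ℕ := ∑ p ∈ desSet 1 π, ((p.1 : ℕ) + 1)

/-- i is a g-gap L-level excedance place (1-based: π_i ≥ i+g and π_i ≥ L) -/
def excp {n : ℕ} (g L : ℕ) (π : Perm (Fin n)) (i : Fin n) : Prop :=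
  (i : ℕ) + g ≤ (π i : ℕ) ∧ L ≤ (π i : ℕ) + 1

/-- g-gap ℓ-level excedance number: positions i ≥ ℓ (1-based) with π_i ≥ i+g -/
def gexc {n : ℕ} (g l : ℕ) (π : Perm (Fin n)) : ℕ :=
  (univ.filter (fun i : Fin n => l ≤ (i : ℕ) + 1 ∧ (i : ℕ) + g ≤ (π i : ℕ))).card

/-- inversions of the subword of π on positions satisfying P -/
def invOn {n : ℕ} (π : Perm (Fin n)) (P : Fin n → Prop) : ℕ :=
  (univ.filter (fun p : Fin n × Fin n =>
    P p.1 ∧ P p.2 ∧ p.1 < p.2 ∧ π p.2 < π p.1)).card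

/-- g-gap L-level Denert statistic: Σ_{i ∈ gExcp}(i+g-1) (1-based) + inversions
of the excedance subword + inversions of the non-excedance subword -/
def gden {n : ℕ} (g L : ℕ) (π : Perm (Fin n)) : ℕ :=
  (∑ i ∈ univ.filter (fun i : Fin n => excp g L π i), ((i : ℕ) + g)) +
  invOn π (fun i => excp g L π i) +
  invOn π (fun i => ¬ excp g L π i)

/-- |S(π)| = rdes(π) + r - 1, where π ∈ S_{n-1} with n = m+1. -/
theorem card_S (m r : ℕ) (hr : 1 ≤ r) (hn : r ≤ m + 1) (π : Perm (Fin m)) :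
    (univ.filter (fun i : Fin m =>
        (∃ p : Fin m, (i : ℕ) = (p : ℕ) + 1 ∧ (π i : ℕ) + r ≤ (π p : ℕ)) ∨
        (m + 1 - r < (π i : ℕ) + 1))).card = rdes r π + r - 1 := by
  classical
  rw [Finset.filter_or]
  have hdisj : Disjoint
      (univ.filter (fun i : Fin m => ∃ p : Fin m, (i : ℕ) = (p : ℕ) + 1 ∧ (π i : ℕ) + r ≤ (π p : ℕ)))
      (univ.filter (fun i : Fin m => m + 1 - r < (π i : ℕ) + 1)) := by
    rw [Finset.disjoint_left]
    intro a ha hb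
    simp only [Finset.mem_filter, Finset.mem_univ, true_and] at ha hb
    obtain ⟨p, hp1, hp2⟩ := ha
    have h1 : (π p : ℕ) < m := (π p).isLt
    omega
  rw [Finset.card_union_of_disjoint hdisj]
  have hA : (univ.filter (fun i : Fin m =>
      ∃ p : Fin m, (i : ℕ) = (p : ℕ) + 1 ∧ (π i : ℕ) + r ≤ (π p : ℕ))).card = rdes r π := by
    rw [rdes, desSet]
    refine (Finset.card_nbij (fun a => a.2) ?_ ?_ ?_).symm
    · intro a ha
      simp only [Finset.coe_filter, Set.mem_setOf_eq, Finset.mem_filter, Finset.mem_univ, true_and] at ha ⊢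
      exact ⟨a.1, ha.1, ha.2⟩
    · intro a ha b hb hab
      simp only [Finset.coe_filter, Set.mem_setOf_eq, Finset.mem_univ, true_and] at ha hb
      have : (a.1 : ℕ) = (b.1 : ℕ) := by
        have := ha.1; have := hb.1; simp only at hab; omega
      exact Prod.ext (Fin.ext this) hab
    · intro i hi
      simp only [Finset.coe_filter, Set.mem_setOf_eq, Finset.mem_univ, true_and] at hi
      obtain ⟨p, hp1, hp2⟩ := hi
      exact ⟨(p, i), by simp [hp1, hp2], rfl⟩
  have hB : (univ.filter (fun i : Fin m => m + 1 - r < (π i : ℕ) + 1)).card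
      = r - 1 := by
    have h1 : (univ.filter (fun i : Fin m => m + 1 - r < (π i : ℕ) + 1)).card
        = (Finset.Ico (m + 1 - r) m).card := by
      refine Finset.card_nbij (fun i => (π i : ℕ)) ?_ ?_ ?_
      · intro a ha
        simp only [Finset.coe_filter, Set.mem_setOf_eq, Finset.mem_filter, Finset.mem_univ, true_and] at ha
        have := (π a).isLt
        simp only [Finset.coe_Ico, Set.mem_Ico, Finset.mem_Ico]
        omega
      · intro a ha b hb hab
        exact π.injective (Fin.ext hab)
      · intro v hv
        simp only [Finset.coe_Ico, Set.mem_Ico] at hv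
        refine ⟨π.symm ⟨v, hv.2⟩, ?_, ?_⟩
        · simp only [Finset.coe_filter, Set.mem_setOf_eq, Finset.mem_univ, true_and,
            Equiv.apply_symm_apply]
          omega
        · simp
    rw [h1, Nat.card_Ico]
    omega
  rw [hA, hB]
  omega

end

end PaperStat
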